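/- Let f : ℝ → ℝ satisfy f(s) = 0 for s ≤ 0, f continuous, (f1) f(s)/s³ → 0 as s → 0⁺, (f2) s ↦ f(s)/s³ strictly increasing on (0,∞), and (f4) f(s) ≤ C(1 + s^{q−1}) for all s > 0 with some C > 0 and 4 < q < 6. Let w : ℝ³ → ℝ be continuous, everywhere positive, and square-integrable with ∫_{ℝ³} w⁶ dz < ∞. Let A > 0 and B ≥ 0 be real numbers such that A + B = ∫_{ℝ³}(f(w(z))·w(z) + w(z)⁶) dz. If T > 0 satisfies T·A + T³·B = ∫_{ℝ³}(f(T·w(z))·w(z) + T⁵·w(z)⁶) dz, then T = 1. -/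

import Mathlib

open MeasureTheory Real Set Filter Topology Metric

noncomputable section

abbrev E3 := EuclideanSpace ℝ (Fin 3)

theorem scaling_factor_is_one
    (f : ℝ → ℝ) (hf0 : ∀ s ≤ (0:ℝ), f s = 0) (hfc : Continuous f)
    (hf1 : Tendsto (fun s => f s / s ^ 3) (𝓝[>] 0) (𝓝 0))
    (hf2 : StrictMonoOn (fun s => f s / s ^ 3) (Ioi 0))
    (hf4 : ∃ C > (0:ℝ), ∃ q : ℝ, 4 < q ∧ q < 6 ∧ ∀ s > (0:ℝ), f s ≤ C * (1 + s ^ (q - 1)))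
    (w : E3 → ℝ) (hwc : Continuous w) (hwpos : ∀ z, 0 < w z)
    (hw2 : Integrable (fun z : E3 => (w z) ^ 2))
    (hw6 : Integrable (fun z : E3 => (w z) ^ 6))
    (A B : ℝ) (hA : 0 < A) (hB : 0 ≤ B)
    (hAB : A + B = ∫ z : E3, (f (w z) * w z + (w z) ^ 6))
    (T : ℝ) (hT : 0 < T)
    (hTeq : T * A + T ^ 3 * B = ∫ z : E3, (f (T * w z) * w z + T ^ 5 * (w z) ^ 6)) :
    T = 1 := by
  -- nonnegativity of f s / s^3 on (0,∞)
  have hphi : ∀ s > (0:ℝ), 0 ≤ f s / s ^ 3 := by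
    intro s hs
    refine le_of_tendsto hf1 ?_
    filter_upwards [Ioo_mem_nhdsGT_of_mem ⟨le_refl (0:ℝ), hs⟩] with t ht
    exact (hf2 ht.1 hs ht.2).le
  have hfnn : ∀ s > (0:ℝ), 0 ≤ f s := by
    intro s hs
    have h := mul_nonneg (hphi s hs) (pow_pos hs 3).le
    rwa [div_mul_cancel₀ _ (pow_pos hs 3).ne'] at h
  have hmono := hf2.monotoneOn
  -- scaling comparison: for 0 < a ≤ b, f a * b^3 ≤ f b * a^3
  have hscale : ∀ a > (0:ℝ), ∀ b > (0:ℝ), a ≤ b → f a * b ^ 3 ≤ f b * a ^ 3 := by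
    intro a ha b hb hab
    have h := hmono (mem_Ioi.mpr ha) (mem_Ioi.mpr hb) hab
    exact (div_le_div_iff₀ (pow_pos ha 3) (pow_pos hb 3)).mp h
  -- integrability
  have hint : ∀ t : ℝ, 0 < t → Integrable (fun z : E3 => f (t * w z) * w z) := by
    intro t ht
    obtain ⟨C, hC, q, hq4, hq6, hfq⟩ := hf4
    have hf1nn : 0 ≤ f 1 := hfnn 1 one_pos
    set K : ℝ := max (f 1 * t ^ 3) (2 * C * t ^ 5) with hK
    have hKnn : 0 ≤ K := le_trans (by positivity) (le_max_left _ _)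
    apply Integrable.mono ((hw2.add hw6).const_mul K)
    · exact ((hfc.comp (continuous_const.mul hwc)).mul hwc).aestronglyMeasurable
    · refine ae_of_all _ fun z => ?_
      set s := w z with hsdef
      have hs : 0 < s := hwpos z
      have hts : 0 < t * s := by positivity
      have hnn : 0 ≤ f (t * s) * s := mul_nonneg (hfnn _ hts) hs.le
      simp only [Pi.add_apply]
      rw [Real.norm_eq_abs, Real.norm_eq_abs, abs_of_nonneg hnn,
        abs_of_nonneg (show (0:ℝ) ≤ K * (s ^ 2 + s ^ 6) from mul_nonneg hKnn (by positivity))]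
      rcases le_total (t * s) 1 with h1 | h1
      · have h2 := hscale (t * s) hts 1 one_pos h1
        rw [one_pow, mul_one] at h2
        calc f (t * s) * s ≤ f 1 * (t * s) ^ 3 * s :=
              mul_le_mul_of_nonneg_right h2 hs.le
          _ = f 1 * t ^ 3 * s ^ 4 := by ring
          _ ≤ K * (s ^ 2 + s ^ 6) := by
              have h4 : s ^ 4 ≤ s ^ 2 + s ^ 6 := by nlinarith [sq_nonneg (s - s ^ 3)]
              exact mul_le_mul (le_max_left _ _) h4 (by positivity) hKnn
      · have hb := hfq (t * s) hts
        have h1' : (1:ℝ) ≤ (t * s) ^ (q - 1) :=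
          Real.one_le_rpow h1 (by linarith)
        have h2 : (t * s) ^ (q - 1) ≤ (t * s) ^ (5:ℝ) :=
          Real.rpow_le_rpow_of_exponent_le h1 (by linarith)
        have h3 : (t * s) ^ (5:ℝ) = (t * s) ^ (5:ℕ) := by
          rw [show (5:ℝ) = ((5:ℕ):ℝ) by norm_num, Real.rpow_natCast]
        have hfb : f (t * s) ≤ 2 * C * (t * s) ^ 5 := by
          calc f (t * s) ≤ C * (1 + (t * s) ^ (q - 1)) := hb
            _ ≤ C * ((t * s) ^ (q - 1) + (t * s) ^ (q - 1)) := by nlinarith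
            _ = 2 * C * (t * s) ^ (q - 1) := by ring
            _ ≤ 2 * C * (t * s) ^ (5:ℝ) := by nlinarith
            _ = 2 * C * (t * s) ^ 5 := by rw [h3]
        calc f (t * s) * s ≤ 2 * C * (t * s) ^ 5 * s :=
              mul_le_mul_of_nonneg_right hfb hs.le
          _ = 2 * C * t ^ 5 * s ^ 6 := by ring
          _ ≤ K * (s ^ 2 + s ^ 6) :=
              mul_le_mul (le_max_right _ _) (by nlinarith [sq_nonneg s])
                (by positivity) hKnn
  have hi1 : Integrable (fun z : E3 => f (w z) * w z) := by
    simpa using hint 1 one_pos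
  have hiT := hint T hT
  -- split integrals
  set I1 : ℝ := ∫ z : E3, f (w z) * w z with hI1
  set I2 : ℝ := ∫ z : E3, (w z) ^ 6 with hI2
  have hAB' : A + B = I1 + I2 := by
    rw [hAB, integral_add hi1 hw6]
  have hTeq' : T * A + T ^ 3 * B = (∫ z : E3, f (T * w z) * w z) + T ^ 5 * I2 := by
    rw [hTeq, integral_add hiT (hw6.const_mul _), integral_const_mul]
  have hI2pos : 0 < I2 := by
    rw [hI2, integral_pos_iff_support_of_nonneg (fun z => by positivity) hw6]
    have hsup : Function.support (fun z : E3 => (w z) ^ 6) = Set.univ := by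
      ext z
      simp [pow_ne_zero_iff, (hwpos z).ne']
    rw [hsup]
    exact isOpen_univ.measure_pos volume ⟨0, trivial⟩
  have hI1nn : 0 ≤ I1 :=
    integral_nonneg fun z => mul_nonneg (hfnn _ (hwpos z)) (hwpos z).le
  rcases lt_trichotomy T 1 with hlt | heq | hgt
  · exfalso
    have hpt : ∀ z : E3, f (T * w z) * w z ≤ T ^ 3 * (f (w z) * w z) := by
      intro z
      have ha := hwpos z
      have h := hscale (T * w z) (by positivity) (w z) ha
        (by nlinarith)
      have h' : f (T * w z) * (w z) ^ 3 ≤ (T ^ 3 * f (w z)) * (w z) ^ 3 := by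
        nlinarith
      have := (mul_le_mul_iff_of_pos_right (pow_pos ha 3)).mp h'
      nlinarith
    have hIle : (∫ z : E3, f (T * w z) * w z) ≤ T ^ 3 * I1 := by
      rw [hI1, ← integral_const_mul]
      exact integral_mono hiT (hi1.const_mul _) hpt
    have hT2 : T ^ 2 < 1 := by nlinarith
    have h5 : T ^ 5 * I2 < T ^ 3 * I2 := by
      nlinarith [mul_pos (mul_pos (pow_pos hT 3) hI2pos) (show (0:ℝ) < 1 - T ^ 2 by linarith)]
    have hABm : T ^ 3 * A + T ^ 3 * B = T ^ 3 * I1 + T ^ 3 * I2 := by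
      linear_combination T ^ 3 * hAB'
    have hcon : T * A < T ^ 3 * A := by linarith
    have hpos : 0 < A * (T * (1 - T ^ 2)) :=
      mul_pos hA (mul_pos hT (by linarith))
    have hkey : T * A - T ^ 3 * A = A * (T * (1 - T ^ 2)) := by ring
    linarith
  · exact heq
  · exfalso
    have hpt : ∀ z : E3, T ^ 3 * (f (w z) * w z) ≤ f (T * w z) * w z := by
      intro z
      have ha := hwpos z
      have h := hscale (w z) ha (T * w z) (by positivity) (by nlinarith)
      have h' : (T ^ 3 * f (w z)) * (w z) ^ 3 ≤ f (T * w z) * (w z) ^ 3 := by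
        nlinarith
      have := (mul_le_mul_iff_of_pos_right (pow_pos ha 3)).mp h'
      nlinarith
    have hIle : T ^ 3 * I1 ≤ (∫ z : E3, f (T * w z) * w z) := by
      rw [hI1, ← integral_const_mul]
      exact integral_mono (hi1.const_mul _) hiT hpt
    have hT2 : 1 < T ^ 2 := by nlinarith
    have h5 : T ^ 3 * I2 < T ^ 5 * I2 := by
      nlinarith [mul_pos (mul_pos (pow_pos hT 3) hI2pos) (show (0:ℝ) < T ^ 2 - 1 by linarith)]
    have hABm : T ^ 3 * A + T ^ 3 * B = T ^ 3 * I1 + T ^ 3 * I2 := by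
      linear_combination T ^ 3 * hAB'
    have hcon : T ^ 3 * A < T * A := by linarith
    have hpos : 0 < A * (T * (T ^ 2 - 1)) :=
      mul_pos hA (mul_pos hT (by linarith))
    have hkey : T ^ 3 * A - T * A = A * (T * (T ^ 2 - 1)) := by ring
    linarith
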